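/- Let r > 0, a > 0, v0 > 0 with a/v0 < r, and let v : ℝ → ℝ be continuously differentiable with v(x) ≥ v0 for all x ∈ ℝ. Let δ : C([−r,0], ℝ) → ℝ be the map assigning to each continuous φ the unique u ∈ (0, r) with ∫_{−u}^{0} v(φ(s)) ds = a. Then δ is Fréchet differentiable at every φ ∈ C([−r,0], ℝ) (with respect to the supremum norm on C([−r,0],ℝ)), and for every χ ∈ C([−r,0], ℝ) the derivative satisfies (Dδ(φ))(χ) = −(∫_{−δ(φ)}^{0} v'(φ(s)) χ(s) ds) / v(φ(−δ(φ))). -/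

import Mathlib

open Set MeasureTheory intervalIntegral Filter Asymptotics

theorem delay_functional_hasFDerivAt
    (r a v0 : ℝ) (hr : 0 < r) (ha : 0 < a) (hv0 : 0 < v0)
    (hav : a / v0 < r) (hle : (-r : ℝ) ≤ 0)
    (v v' : ℝ → ℝ) (hv : ∀ y, HasDerivAt v (v' y) y) (hv' : Continuous v')
    (hvlb : ∀ y, v0 ≤ v y)
    (δ : C(Set.Icc (-r) (0 : ℝ), ℝ) → ℝ)
    (hδ : ∀ φ : C(Set.Icc (-r) (0 : ℝ), ℝ),
      δ φ ∈ Set.Ioo 0 r ∧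
      (∫ s in (-(δ φ))..0, v (Set.IccExtend hle (⇑φ) s)) = a) :
    ∀ φ : C(Set.Icc (-r) (0 : ℝ), ℝ),
      ∃ L : C(Set.Icc (-r) (0 : ℝ), ℝ) →L[ℝ] ℝ,
        HasFDerivAt δ L φ ∧
        ∀ χ : C(Set.Icc (-r) (0 : ℝ), ℝ),
          L χ =
            -(∫ s in (-(δ φ))..0,
                v' (Set.IccExtend hle (⇑φ) s) * Set.IccExtend hle (⇑χ) s) /
              v (Set.IccExtend hle (⇑φ) (-(δ φ))) := by
  -- generalities
  have hvc : Continuous v := continuous_iff_continuousAt.mpr fun y => (hv y).continuousAt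
  have hextC : ∀ f : C(Set.Icc (-r) (0:ℝ), ℝ), Continuous (Set.IccExtend hle ⇑f) :=
    fun f => f.continuous.Icc_extend'
  have hextB : ∀ (f : C(Set.Icc (-r) (0:ℝ), ℝ)) (x : ℝ), |Set.IccExtend hle (⇑f) x| ≤ ‖f‖ := by
    intro f x
    rw [Set.IccExtend_apply]
    simpa using f.norm_coe_le_norm _
  have hextadd : ∀ (f g : C(Set.Icc (-r) (0:ℝ), ℝ)) (x : ℝ),
      Set.IccExtend hle (⇑(f + g)) x = Set.IccExtend hle (⇑f) x + Set.IccExtend hle (⇑g) x := by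
    intro f g x; simp [Set.IccExtend_apply]
  have hextsmul : ∀ (t : ℝ) (f : C(Set.Icc (-r) (0:ℝ), ℝ)) (x : ℝ),
      Set.IccExtend hle (⇑(t • f)) x = t * Set.IccExtend hle (⇑f) x := by
    intro t f x; simp [Set.IccExtend_apply]
  intro φ
  obtain ⟨hu0, hFφ⟩ := hδ φ
  set u0 : ℝ := δ φ with hu0def
  set φh : ℝ → ℝ := Set.IccExtend hle ⇑φ with hφh
  set c : ℝ := v (φh (-u0)) with hcdef
  have hc : v0 ≤ c := hvlb _
  have hcpos : 0 < c := lt_of_lt_of_le hv0 hc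
  -- the compact interval containing all relevant values
  set I : Set ℝ := Set.Icc (-(‖φ‖+1)) (‖φ‖+1) with hI
  have hIφ : ∀ s : ℝ, φh s ∈ I := by
    intro s
    have h1 := (abs_le.mp (hextB φ s)).1
    have h2 := (abs_le.mp (hextB φ s)).2
    exact ⟨by linarith, by linarith⟩
  have hIψ : ∀ (χ : C(Set.Icc (-r) (0:ℝ), ℝ)), ‖χ‖ ≤ 1 →
      ∀ s : ℝ, φh s + Set.IccExtend hle (⇑χ) s ∈ I := by
    intro χ hχ s
    have h1 := abs_le.mp (hextB φ s)
    have h2 := abs_le.mp (hextB χ s)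
    exact ⟨by linarith [h1.1, h2.1], by linarith [h1.2, h2.2]⟩
  -- bound on v' over I
  obtain ⟨B, hB⟩ := isCompact_Icc.exists_bound_of_continuousOn
    (s := I) hv'.continuousOn
  have h0I : (0:ℝ) ∈ I := by
    have := norm_nonneg φ
    exact ⟨by linarith, by linarith⟩
  have hB0 : 0 ≤ B := le_trans (norm_nonneg _) (hB 0 h0I)
  have hBabs : ∀ x ∈ I, |v' x| ≤ B := fun x hx => by simpa using hB x hx
  -- v is B-Lipschitz on I
  have hlip : ∀ x ∈ I, ∀ y ∈ I, |v y - v x| ≤ B * |y - x| := by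
    intro x hx y hy
    have := (convex_Icc _ _).norm_image_sub_le_of_norm_hasDerivWithin_le
      (f := v) (f' := v') (fun z _ => (hv z).hasDerivWithinAt)
      (fun z hz => by simpa using hBabs z hz) hx hy
    simpa using this
  -- MVT quadratic estimate
  have hquad : ∀ ε1 : ℝ, 0 < ε1 → ∃ η > (0:ℝ), ∀ x h : ℝ, x ∈ I → x + h ∈ I → |h| ≤ η →
      |v (x + h) - v x - v' x * h| ≤ ε1 * |h| := by
    intro ε1 hε1
    obtain ⟨η, hη, hηP⟩ := Metric.uniformContinuousOn_iff_le.mp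
      (isCompact_Icc.uniformContinuousOn_of_continuous (s := I) hv'.continuousOn) ε1 hε1
    refine ⟨η, hη, ?_⟩
    intro x h hx hxh hh
    have hSI : Set.uIcc x (x + h) ⊆ I := Set.ordConnected_Icc.uIcc_subset hx hxh
    have hzx : ∀ z ∈ Set.uIcc x (x + h), |z - x| ≤ |h| := by
      intro z hz
      have h4 := le_abs_self h
      have h5 := neg_abs_le h
      rcases Set.mem_uIcc.mp hz with ⟨h1, h2⟩ | ⟨h1, h2⟩ <;> rw [abs_le] <;>
        constructor <;> linarith
    have key := (convex_uIcc x (x+h)).norm_image_sub_le_of_norm_hasDerivWithin_le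
      (f := fun z => v z - v' x * z) (f' := fun z => v' z - v' x)
      (fun z _ => by have hd := ((hv z).sub ((hasDerivAt_id' z).const_mul (v' x))).hasDerivWithinAt (s := Set.uIcc x (x + h)); rw [mul_one] at hd; exact hd)
      (fun z hz => by
        have := hηP z (hSI hz) x hx (by rw [Real.dist_eq]; exact le_trans (hzx z hz) hh)
        rw [Real.dist_eq] at this
        simpa using this)
      (Set.left_mem_uIcc) (Set.right_mem_uIcc)
    have heq : v (x + h) - v' x * (x + h) - (v x - v' x * x) = v (x + h) - v x - v' x * h := by
      ring
    simpa [Real.norm_eq_abs, heq, add_sub_cancel_left] using key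
  -- integrability
  have hintφ : ∀ p q : ℝ, IntervalIntegrable (fun s => v (φh s)) volume p q :=
    fun p q => (hvc.comp (hextC φ)).intervalIntegrable p q
  have hintg : ∀ (χ : C(Set.Icc (-r) (0:ℝ), ℝ)) (p q : ℝ),
      IntervalIntegrable (fun s => v' (φh s) * Set.IccExtend hle (⇑χ) s) volume p q :=
    fun χ p q => ((hv'.comp (hextC φ)).mul (hextC χ)).intervalIntegrable p q
  have hintψ : ∀ (χ : C(Set.Icc (-r) (0:ℝ), ℝ)) (p q : ℝ),
      IntervalIntegrable (fun s => v (φh s + Set.IccExtend hle (⇑χ) s)) volume p q :=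
    fun χ p q => (hvc.comp ((hextC φ).add (hextC χ))).intervalIntegrable p q
  -- rewrite the defining equations pointwise
  have hco : ∀ (χ : C(Set.Icc (-r) (0:ℝ), ℝ)) (s : ℝ),
      Set.IccExtend hle (⇑(φ + χ)) s = φh s + Set.IccExtend hle (⇑χ) s := by
    intro χ s; rw [hφh]; exact hextadd φ χ s
  -- a priori Lipschitz-type bound for δ
  set K : ℝ := r * B / v0 with hK
  have hK0 : 0 ≤ K := by positivity
  have keyA : ∀ χ : C(Set.Icc (-r) (0:ℝ), ℝ), ‖χ‖ ≤ 1 →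
      |δ (φ + χ) - u0| ≤ K * ‖χ‖ := by
    intro χ hχ1
    obtain ⟨hu, hFψ⟩ := hδ (φ + χ)
    simp only [hco] at hFψ
    set u : ℝ := δ (φ + χ) with hudef
    set χh : ℝ → ℝ := Set.IccExtend hle ⇑χ with hχh
    have hadj : (∫ s in (-u)..(-u0), v (φh s + χh s)) + ∫ s in (-u0)..0, v (φh s + χh s) = a := by
      rw [integral_add_adjacent_intervals (hintψ χ _ _) (hintψ χ _ _)]
      exact hFψ
    have h1 : (∫ s in (-u)..(-u0), v (φh s + χh s))
        = ∫ s in (-u0)..0, (v (φh s) - v (φh s + χh s)) := by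
      rw [integral_sub (hintφ _ _) (hintψ χ _ _), hFφ]
      linarith only [hadj]
    have h2 : ‖∫ s in (-u0)..0, (v (φh s) - v (φh s + χh s))‖ ≤ B * ‖χ‖ * |0 - (-u0)| := by
      apply intervalIntegral.norm_integral_le_of_norm_le_const
      intro s _
      have hls := hlip (φh s) (hIφ s) (φh s + χh s) (hIψ χ hχ1 s)
      have hχs := hextB χ s
      have : |v (φh s) - v (φh s + χh s)| ≤ B * |χh s| := by
        rw [abs_sub_comm]
        simpa using hls
      calc ‖v (φh s) - v (φh s + χh s)‖ = |v (φh s) - v (φh s + χh s)| := rfl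
        _ ≤ B * |χh s| := this
        _ ≤ B * ‖χ‖ := mul_le_mul_of_nonneg_left hχs hB0
    have h3 : v0 * |u - u0| ≤ |∫ s in (-u)..(-u0), v (φh s + χh s)| := by
      rcases le_total u0 u with h | h
      · have hmono : (∫ s in (-u)..(-u0), (v0 : ℝ)) ≤ ∫ s in (-u)..(-u0), v (φh s + χh s) :=
          intervalIntegral.integral_mono_on (by linarith only [h]) (intervalIntegrable_const)
            (hintψ χ _ _) (fun s _ => hvlb _)
        rw [intervalIntegral.integral_const, smul_eq_mul] at hmono
        rw [abs_of_nonneg (by linarith only [h] : (0:ℝ) ≤ u - u0)]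
        calc v0 * (u - u0) = ((-u0) - (-u)) * v0 := by ring
          _ ≤ ∫ s in (-u)..(-u0), v (φh s + χh s) := hmono
          _ ≤ |∫ s in (-u)..(-u0), v (φh s + χh s)| := le_abs_self _
      · have hmono : (∫ s in (-u0)..(-u), (v0 : ℝ)) ≤ ∫ s in (-u0)..(-u), v (φh s + χh s) :=
          intervalIntegral.integral_mono_on (by linarith only [h]) (intervalIntegrable_const)
            (hintψ χ _ _) (fun s _ => hvlb _)
        rw [intervalIntegral.integral_const, smul_eq_mul] at hmono
        rw [intervalIntegral.integral_symm, abs_neg,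
          abs_of_nonneg (le_trans (mul_nonneg (by linarith only [h]) hv0.le) hmono)]
        rw [abs_of_nonpos (by linarith only [h] : u - u0 ≤ 0)]
        calc v0 * -(u - u0) = ((-u) - (-u0)) * v0 := by ring
          _ ≤ ∫ s in (-u0)..(-u), v (φh s + χh s) := hmono
    have h4 : v0 * |u - u0| ≤ B * ‖χ‖ * u0 := by
      have h5 : |(0:ℝ) - (-u0)| = u0 := by
        rw [show (0:ℝ) - (-u0) = u0 by ring, abs_of_pos hu0.1]
      rw [h1] at h3
      rw [h5, Real.norm_eq_abs] at h2
      linarith only [h2, h3]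
    have h6 : B * ‖χ‖ * u0 ≤ r * B * ‖χ‖ := by
      have e := mul_le_mul_of_nonneg_left hu0.2.le (mul_nonneg hB0 (norm_nonneg χ))
      linarith only [e]
    rw [hK, div_mul_eq_mul_div, le_div_iff₀ hv0]
    linarith only [h4, h6]
  -- the candidate derivative
  set Llin : C(Set.Icc (-r) (0:ℝ), ℝ) →ₗ[ℝ] ℝ :=
    { toFun := fun χ => -(∫ s in (-u0)..0, v' (φh s) * Set.IccExtend hle (⇑χ) s) / c
      map_add' := by
        intro χ ζ
        have h1 : (fun s => v' (φh s) * Set.IccExtend hle (⇑(χ + ζ)) s)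
            = fun s => v' (φh s) * Set.IccExtend hle (⇑χ) s + v' (φh s) * Set.IccExtend hle (⇑ζ) s := by
          funext s; rw [hextadd]; ring
        simp only [h1]
        rw [integral_add (hintg χ _ _) (hintg ζ _ _)]
        ring
      map_smul' := by
        intro t χ
        have h1 : (fun s => v' (φh s) * Set.IccExtend hle (⇑(t • χ)) s)
            = fun s => t * (v' (φh s) * Set.IccExtend hle (⇑χ) s) := by
          funext s; rw [hextsmul]; ring
        simp only [h1]
        rw [intervalIntegral.integral_const_mul]
        simp only [RingHom.id_apply, smul_eq_mul]
        ring } with hLlin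
  have hLb : ∀ χ : C(Set.Icc (-r) (0:ℝ), ℝ), ‖Llin χ‖ ≤ (r * B / v0) * ‖χ‖ := by
    intro χ
    have h1 : ‖∫ s in (-u0)..0, v' (φh s) * Set.IccExtend hle (⇑χ) s‖ ≤ (B * ‖χ‖) * |0 - (-u0)| := by
      apply intervalIntegral.norm_integral_le_of_norm_le_const
      intro s _
      have := hBabs (φh s) (hIφ s)
      have hχs := hextB χ s
      rw [Real.norm_eq_abs, abs_mul]
      exact mul_le_mul this hχs (abs_nonneg _) hB0
    have h5 : |(0:ℝ) - (-u0)| = u0 := by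
      rw [show (0:ℝ) - (-u0) = u0 by ring, abs_of_pos hu0.1]
    rw [h5, Real.norm_eq_abs] at h1
    have h2 : ‖Llin χ‖ = |∫ s in (-u0)..0, v' (φh s) * Set.IccExtend hle (⇑χ) s| / c := by
      have hv : Llin χ = -(∫ s in (-u0)..0, v' (φh s) * Set.IccExtend hle (⇑χ) s) / c := rfl
      rw [hv, Real.norm_eq_abs, abs_div, abs_neg, abs_of_pos hcpos]
    rw [h2, div_le_iff₀ hcpos]
    calc |∫ s in (-u0)..0, v' (φh s) * Set.IccExtend hle (⇑χ) s| ≤ B * ‖χ‖ * u0 := h1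
      _ ≤ r * B / v0 * ‖χ‖ * c := by
          rw [div_mul_eq_mul_div, div_mul_eq_mul_div, le_div_iff₀ hv0]
          have hP : 0 ≤ B * ‖χ‖ := mul_nonneg hB0 (norm_nonneg χ)
          have e1 : B * ‖χ‖ * u0 ≤ B * ‖χ‖ * r := mul_le_mul_of_nonneg_left hu0.2.le hP
          have e2 := mul_le_mul_of_nonneg_right e1 hv0.le
          have e3 := mul_le_mul_of_nonneg_left hc (mul_nonneg hP hr.le)
          linarith only [e2, e3]
  set L : C(Set.Icc (-r) (0:ℝ), ℝ) →L[ℝ] ℝ := Llin.mkContinuous (r * B / v0) hLb with hL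
  refine ⟨L, ?_, fun χ => rfl⟩
  -- main estimate
  rw [hasFDerivAt_iff_isLittleO_nhds_zero, Asymptotics.isLittleO_iff]
  intro ε hε
  set ε1 : ℝ := ε * v0 / (3 * r) with hε1d
  have hε1 : 0 < ε1 := by positivity
  set ε2 : ℝ := ε * v0 / (6 * (K + 1)) with hε2d
  have hε2 : 0 < ε2 := by positivity
  obtain ⟨η, hη, hηP⟩ := hquad ε1 hε1
  have hcont : ContinuousAt (fun s => v (φh s)) (-u0) := (hvc.comp (hextC φ)).continuousAt
  obtain ⟨τ, hτ, hτP⟩ := Metric.continuousAt_iff.mp hcont ε2 hε2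
  set ρ : ℝ := min (min 1 η) (min (τ / (K + 1)) (ε2 / (B + 1))) with hρd
  have hρ : 0 < ρ := by
    apply lt_min (lt_min one_pos hη) (lt_min (by positivity) (by positivity))
  rw [Metric.eventually_nhds_iff]
  refine ⟨ρ, hρ, ?_⟩
  intro χ hχρ
  rw [dist_zero_right] at hχρ
  have hχ1 : ‖χ‖ ≤ 1 := le_trans hχρ.le (le_trans (min_le_left _ _) (min_le_left _ _))
  have hχη : ‖χ‖ ≤ η := le_trans hχρ.le (le_trans (min_le_left _ _) (min_le_right _ _))
  have hρτ : ρ ≤ τ / (K + 1) := le_trans (min_le_right _ _) (min_le_left _ _)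
  have hρε2 : ρ ≤ ε2 / (B + 1) := le_trans (min_le_right _ _) (min_le_right _ _)
  have hBχ : B * ‖χ‖ ≤ ε2 := by
    rw [le_div_iff₀ (by positivity : (0:ℝ) < B + 1)] at hρε2
    have e := mul_le_mul_of_nonneg_left hχρ.le hB0
    linarith only [e, hρ.le, hρε2]
  obtain ⟨hu, hFψ⟩ := hδ (φ + χ)
  simp only [hco] at hFψ
  have hA := keyA χ hχ1
  set u : ℝ := δ (φ + χ) with hudef
  set χh : ℝ → ℝ := Set.IccExtend hle ⇑χ with hχh
  have hKτ : K * ‖χ‖ < τ := by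
    rw [le_div_iff₀ (by positivity : (0:ℝ) < K + 1)] at hρτ
    have e := mul_le_mul_of_nonneg_left hχρ.le hK0
    linarith only [e, hρ, hρτ]
  -- error terms
  set E1 : ℝ := ∫ s in (-u)..(-u0), (v (φh s + χh s) - c) with hE1d
  set E2 : ℝ := ∫ s in (-u0)..0, (v (φh s + χh s) - v (φh s) - v' (φh s) * χh s) with hE2d
  have hintc : ∀ p q : ℝ, IntervalIntegrable (fun _ : ℝ => c) volume p q :=
    fun p q => intervalIntegrable_const
  have hE1 : E1 = (∫ s in (-u)..(-u0), v (φh s + χh s)) - c * (u - u0) := by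
    rw [hE1d, integral_sub (hintψ χ _ _) (hintc _ _), intervalIntegral.integral_const,
      smul_eq_mul]
    ring
  have hE2 : E2 = (∫ s in (-u0)..0, v (φh s + χh s)) - (∫ s in (-u0)..0, v (φh s))
      - ∫ s in (-u0)..0, v' (φh s) * χh s := by
    rw [hE2d, integral_sub ((hintψ χ _ _).sub (hintφ _ _)) (hintg χ _ _),
      integral_sub (hintψ χ _ _) (hintφ _ _)]
  have hadj : (∫ s in (-u)..(-u0), v (φh s + χh s)) + ∫ s in (-u0)..0, v (φh s + χh s) = a := by
    rw [integral_add_adjacent_intervals (hintψ χ _ _) (hintψ χ _ _)]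
    exact hFψ
  have hiden : c * (u - u0) + (∫ s in (-u0)..0, v' (φh s) * χh s) = -(E1 + E2) := by
    linarith only [hE1, hE2, hadj, hFφ]
  -- the difference equals -(E1+E2)/c
  have hLχ : L χ = -(∫ s in (-u0)..0, v' (φh s) * χh s) / c := rfl
  have hdiff : δ (φ + χ) - δ φ - L χ = -(E1 + E2) / c := by
    rw [hLχ, ← hu0def, ← hudef]
    field_simp
    linarith only [hiden]
  -- bound E1
  have hE1b : ‖E1‖ ≤ (ε2 + ε2) * |(-u0) - (-u)| := by
    rw [hE1d]
    apply intervalIntegral.norm_integral_le_of_norm_le_const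
    intro s hs
    have hd : |s - (-u0)| ≤ |u - u0| := by
      have h4 := le_abs_self (u - u0)
      have h5 := neg_abs_le (u - u0)
      rcases Set.mem_uIoc.mp hs with ⟨h1, h2⟩ | ⟨h1, h2⟩ <;> rw [abs_le] <;>
        constructor <;> linarith only [h1, h2, h4, h5]
    have hsτ : dist s (-u0) < τ := by
      rw [Real.dist_eq]
      calc |s - (-u0)| ≤ |u - u0| := hd
        _ ≤ K * ‖χ‖ := hA
        _ < τ := hKτ
    have hτ2 : |v (φh s) - c| < ε2 := by
      have := hτP hsτ
      rwa [Real.dist_eq] at this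
    have hlips : |v (φh s + χh s) - v (φh s)| ≤ B * |χh s| := by
      simpa using hlip (φh s) (hIφ s) (φh s + χh s) (hIψ χ hχ1 s)
    have hχs := hextB χ s
    calc ‖v (φh s + χh s) - c‖
        = |v (φh s + χh s) - v (φh s) + (v (φh s) - c)| := by rw [Real.norm_eq_abs]; ring_nf
      _ ≤ |v (φh s + χh s) - v (φh s)| + |v (φh s) - c| := abs_add_le _ _
      _ ≤ B * |χh s| + ε2 := by linarith only [hlips, hτ2]
      _ ≤ ε2 + ε2 := by
          have e := mul_le_mul_of_nonneg_left hχs hB0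
          linarith only [e, hBχ]
  -- bound E2
  have hE2b : ‖E2‖ ≤ (ε1 * ‖χ‖) * |0 - (-u0)| := by
    rw [hE2d]
    apply intervalIntegral.norm_integral_le_of_norm_le_const
    intro s _
    have hq := hηP (φh s) (χh s) (hIφ s) (hIψ χ hχ1 s) (le_trans (hextB χ s) hχη)
    calc ‖v (φh s + χh s) - v (φh s) - v' (φh s) * χh s‖ ≤ ε1 * |χh s| := hq
      _ ≤ ε1 * ‖χ‖ := mul_le_mul_of_nonneg_left (hextB χ s) hε1.le
  -- final arithmetic
  have habs1 : |(-u0) - (-u)| = |u - u0| := by rw [show (-u0) - (-u) = u - u0 by ring]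
  have habs2 : |(0:ℝ) - (-u0)| = u0 := by
    rw [show (0:ℝ) - (-u0) = u0 by ring, abs_of_pos hu0.1]
  rw [hdiff]
  have h2ε2 : (ε2 + ε2) * |u - u0| ≤ (ε2 + ε2) * (K * ‖χ‖) :=
    mul_le_mul_of_nonneg_left hA (by positivity)
  have hcombo : |E1| + |E2| ≤ (ε * v0 / 3) * ‖χ‖ + (ε * v0 / 3) * ‖χ‖ := by
    have hb1 : (ε2 + ε2) * (K * ‖χ‖) ≤ (ε * v0 / 3) * ‖χ‖ := by
      have he : ε2 * (6 * (K + 1)) = ε * v0 := by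
        rw [hε2d]; field_simp
      have he2 : ε2 * (6 * (K + 1)) * ‖χ‖ = ε * v0 * ‖χ‖ := by rw [he]
      have e := mul_nonneg hε2.le (norm_nonneg χ)
      linarith only [he2, e]
    have hb2 : (ε1 * ‖χ‖) * u0 ≤ (ε * v0 / 3) * ‖χ‖ := by
      have he : ε1 * (3 * r) = ε * v0 := by
        rw [hε1d]; field_simp
      have he2 : ε1 * (3 * r) * ‖χ‖ = ε * v0 * ‖χ‖ := by rw [he]
      have e := mul_le_mul_of_nonneg_left hu0.2.le (mul_nonneg hε1.le (norm_nonneg χ))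
      linarith only [he2, e]
    rw [habs1, Real.norm_eq_abs] at hE1b
    rw [habs2, Real.norm_eq_abs] at hE2b
    linarith only [hb1, hb2, hE1b, hE2b, h2ε2]
  have hnorm : ‖-(E1 + E2) / c‖ = |E1 + E2| / c := by
    rw [Real.norm_eq_abs, abs_div, abs_neg, abs_of_pos hcpos]
  rw [hnorm]
  rw [div_le_iff₀ hcpos]
  have htri : |E1 + E2| ≤ |E1| + |E2| := abs_add_le _ _
  have hfin : (ε * v0 / 3) * ‖χ‖ + (ε * v0 / 3) * ‖χ‖ ≤ ε * ‖χ‖ * c := by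
    have e1 := mul_le_mul_of_nonneg_left hc (mul_nonneg hε.le (norm_nonneg χ))
    have e2 := mul_nonneg (mul_nonneg hε.le (norm_nonneg χ)) hv0.le
    linarith only [e1, e2]
  linarith only [htri, hcombo, hfin]
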